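/- If n is odd, then every divisor m of n satisfies that n/m is odd; consequently for odd n with k distinct divisors, there are k distinct F_p(t)-rational points on y^2 = x(x^r+1)(x^r+t^{r(p^n+1)}). -/

import Mathlib

/-- If `n` is odd, then every divisor `m` of `n` satisfies that `n/m` is odd;
consequently for odd `n` with `k` distinct divisors, there are `k` distinct
`F_p(t)`-rational points on `y^2 = x (x^r + 1)(x^r + t^(r(p^n+1)))`. -/
theorem stmt5 (p : ℕ) [Fact p.Prime] (hp : 3 < p) (r : ℕ) (hr : Odd r)
    (hrp : Nat.Coprime r p) (n : ℕ) (hn : 0 < n) (hnodd : Odd n) :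
    (∀ m, m ∣ n → Odd (n / m)) ∧
    ∃ S : Finset (RatFunc (ZMod p) × RatFunc (ZMod p)),
      S.card = n.divisors.card ∧
      ∀ q ∈ S, q.2 ^ 2 = q.1 * (q.1 ^ r + 1) *
        (q.1 ^ r + (RatFunc.X : RatFunc (ZMod p)) ^ (r * (p ^ n + 1))) := by
  have hpprime := (Fact.out : p.Prime)
  have hpodd : Odd p := hpprime.odd_of_ne_two (by omega)
  have hodd : ∀ m, m ∣ n → Odd (n / m) := by
    intro m hm
    rcases Nat.even_or_odd (n / m) with h | h
    · exfalso
      have h2 : (2 : ℕ) ∣ n := dvd_trans h.two_dvd (Nat.div_dvd_of_dvd hm)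
      exact (Nat.not_even_iff_odd.mpr hnodd) (even_iff_two_dvd.mpr h2)
    · exact h
  classical
  refine ⟨hodd, ?_⟩
  -- X^k is injective in k
  have hXinj : Function.Injective (fun k : ℕ => (RatFunc.X : RatFunc (ZMod p)) ^ k) := by
    intro a b hab
    simp only [← RatFunc.algebraMap_X (K := ZMod p), ← map_pow] at hab
    have := RatFunc.algebraMap_injective (ZMod p) hab
    have := congrArg Polynomial.natDegree this
    simpa using this
  -- divisibility: for m ∣ n, p^m+1 ∣ p^n+1
  have hdvd : ∀ m ∈ n.divisors, (p ^ m + 1) ∣ (p ^ n + 1) := by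
    intro m hm
    have hmn : m ∣ n := (Nat.mem_divisors.mp hm).1
    have := Odd.nat_add_dvd_pow_add_pow (p ^ m) 1 (hodd m hmn)
    simpa [← pow_mul, Nat.mul_div_cancel' hmn] using this
  set e : ℕ → ℕ := fun m => (p ^ n + 1) / (p ^ m + 1) with he_def
  have he : ∀ m ∈ n.divisors, e m * (p ^ m + 1) = p ^ n + 1 := fun m hm =>
    Nat.div_mul_cancel (hdvd m hm)
  set f : ℕ → RatFunc (ZMod p) × RatFunc (ZMod p) := fun m =>
    ((RatFunc.X : RatFunc (ZMod p)) ^ (e m),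
     (RatFunc.X : RatFunc (ZMod p)) ^ (e m * (r + 1) / 2) *
       ((RatFunc.X : RatFunc (ZMod p)) ^ (r * e m) + 1) ^ ((p ^ m + 1) / 2)) with hf_def
  refine ⟨n.divisors.image f, ?_, ?_⟩
  · rw [Finset.card_image_of_injOn]
    intro a ha b hb hab
    have heab : e a = e b := hXinj (congrArg Prod.fst hab)
    have h1 : e a * (p ^ a + 1) = e a * (p ^ b + 1) := by
      rw [he a ha, heab, he b hb]
    have hepos : 0 < e a := by
      rcases Nat.eq_zero_or_pos (e a) with h | h
      · exfalso; have := he a ha; rw [h] at this; simp at this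
      · exact h
    have := Nat.eq_of_mul_eq_mul_left hepos h1
    have hpow : p ^ a = p ^ b := by omega
    exact Nat.pow_right_injective hpprime.two_le hpow
  · intro q hq
    rcases Finset.mem_image.mp hq with ⟨m, hm, rfl⟩
    have heq := he m hm
    have hchar : CharP (RatFunc (ZMod p)) p :=
      charP_of_injective_algebraMap' (A := RatFunc (ZMod p)) (ZMod p) p
    set X : RatFunc (ZMod p) := RatFunc.X
    have h2a : e m * (r + 1) / 2 * 2 = e m * (r + 1) := by
      apply Nat.div_mul_cancel
      rcases hr with ⟨j, hj⟩
      exact ⟨e m * (j + 1), by subst hj; ring⟩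
    have h2c : (p ^ m + 1) / 2 * 2 = p ^ m + 1 := by
      apply Nat.div_mul_cancel
      rcases hpodd.pow (n := m) with ⟨j, hj⟩
      exact ⟨j + 1, by omega⟩
    show (X ^ (e m * (r + 1) / 2) * (X ^ (r * e m) + 1) ^ ((p ^ m + 1) / 2)) ^ 2
        = X ^ (e m) * ((X ^ (e m)) ^ r + 1) * ((X ^ (e m)) ^ r + X ^ (r * (p ^ n + 1)))
    have hfrob : (X ^ (r * e m) + 1) ^ p ^ m = X ^ (r * e m * p ^ m) + 1 := by
      rw [add_pow_char_pow, one_pow, ← pow_mul]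
    have hexp : r * (p ^ n + 1) = r * e m + r * e m * p ^ m := by
      rw [← heq]; ring
    calc (X ^ (e m * (r + 1) / 2) * (X ^ (r * e m) + 1) ^ ((p ^ m + 1) / 2)) ^ 2
        = X ^ (e m * (r + 1)) * (X ^ (r * e m) + 1) ^ (p ^ m + 1) := by
          rw [mul_pow, ← pow_mul, ← pow_mul, h2a, h2c]
      _ = X ^ (e m) * (X ^ (r * e m) + 1) * (X ^ (r * e m) * ((X ^ (r * e m) + 1) ^ p ^ m)) := by
          have h3 : e m * (r + 1) = e m + r * e m := by ring
          rw [h3, pow_add, pow_succ]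
          ring
      _ = X ^ (e m) * ((X ^ (e m)) ^ r + 1) * ((X ^ (e m)) ^ r + X ^ (r * (p ^ n + 1))) := by
          rw [hfrob, hexp, pow_add, ← pow_mul, mul_comm (e m) r]
          ring
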